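/- Let k and t be positive integers. Then |ω_k(2t)| ≤ ((24k−1)/24)^t·(2√t/(√π·α_k))·|sin α_k|·(1 + C_2*(k)/t), where C_2*(k) := (1/2)·(1 + 3·(α_k²·sinh α_k + 4·C_2(k))/(4·|sin α_k|)) and C_2(k) := 9k·(3⌈√k⌉+1)²·α_k^{6⌈√k⌉+3}/((6⌈√k⌉+1)·(6⌈√k⌉+3)!). -/

import Mathlib

open Real BigOperators Finset

noncomputable section

/-- The partition function `p(n)`. -/
def pp (n : ℕ) : ℕ := Fintype.card (Nat.Partition n)

/-- `μ(n) = (π/6)·√(24n−1)`. -/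
def μ (n : ℕ) : ℝ := π / 6 * Real.sqrt (24 * (n : ℝ) - 1)

/-- `α = π/6`. -/
def αc : ℝ := π / 6

/-- Rising factorial `(a)_m`. -/
def rf (a : ℝ) : ℕ → ℝ
  | 0 => 1
  | m + 1 => rf a m * (a + (m : ℝ))

/-- Falling factorial `x(x−1)⋯(x−n+1)`. -/
def ff (x : ℝ) : ℕ → ℝ
  | 0 => 1
  | n + 1 => ff x n * (x - (n : ℝ))

/-- Generalized binomial coefficient for real `x`. -/
def gbinom (x : ℝ) (n : ℕ) : ℝ := ff x n / (Nat.factorial n : ℝ)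

/-- The coefficients `ω_k(t)`. -/
def ω (k t : ℕ) : ℝ :=
  ((24 * (k : ℝ) - 1) / (4 * Real.sqrt 6)) ^ t *
    ∑ l ∈ Finset.range ((t + 1) / 2 + 1),
      (Nat.choose (t + 1) l : ℝ) * ((t + 1 - l : ℕ) : ℝ) /
          (Nat.factorial (t + 1 - 2 * l) : ℝ) *
        (-1 : ℝ) ^ l * (π / 6) ^ ((t : ℤ) - 2 * (l : ℤ)) *
        (24 * (k : ℝ) - 1) ^ (-(l : ℤ))

/-- `E_1(t)`. -/
def E1 (t : ℕ) : ℝ :=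
  if t = 0 then 1
  else
    (-1 / 24 : ℝ) ^ t * (rf (1 / 2 - (t : ℝ)) (t + 1) / (t : ℝ)) *
      ∑ u ∈ Finset.Icc 1 t,
        (-1 : ℝ) ^ u * rf (-(t : ℝ)) u * αc ^ (2 * u) /
          ((Nat.factorial (t + u) : ℝ) * (Nat.factorial (2 * u - 1) : ℝ))

/-- `O_1(t)`. -/
def O1 (t : ℕ) : ℝ :=
  π / (12 * Real.sqrt 6) * ((-1 : ℝ) ^ t * rf (1 / 2 - (t : ℝ)) (t + 1) / 24 ^ t) *
    ∑ u ∈ Finset.range (t + 1),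
      (-1 : ℝ) ^ u * rf (-(t : ℝ)) u * αc ^ (2 * u) /
        ((Nat.factorial (t + u + 1) : ℝ) * (Nat.factorial (2 * u) : ℝ))

/-- `e_2(t)`. -/
def e2 (t : ℕ) : ℝ :=
  if t = 0 then 1 else 36 / (π ^ 2 + 36) * ((1 + (αc ^ 2)⁻¹) / 24) ^ t

/-- `o_2(t)`. -/
def o2 (t : ℕ) : ℝ :=
  6 / (π * Real.sqrt 24) * (-1 / 24 : ℝ) ^ t *
    ∑ m ∈ Finset.range (t + 1),
      (-(αc ^ 2)⁻¹) ^ m * gbinom (-(2 * (m : ℝ) + 1) / 2) (t - m)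

/-- `E_2(t)`. -/
def E2 (t : ℕ) : ℝ :=
  if t = 0 then 1
  else if t = 1 then (36 - π ^ 2) / (24 * π ^ 2)
  else 54 / (π ^ 4 * (1 + (αc ^ 2)⁻¹)) * ((1 + (αc ^ 2)⁻¹) / 24) ^ (t - 1)

/-- `O_2(t)`. -/
def O2 (t : ℕ) : ℝ := if t = 0 then o2 0 else o2 t - o2 (t - 1) / 24

/-- `h_1` with `h_1(2t) = E_1(t)`, `h_1(2t+1) = O_1(t)`. -/
def h1 (n : ℕ) : ℝ := if n % 2 = 0 then E1 (n / 2) else O1 (n / 2)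

/-- `h_2` with `h_2(2t) = E_2(t)`, `h_2(2t+1) = O_2(t)`. -/
def h2 (n : ℕ) : ℝ := if n % 2 = 0 then E2 (n / 2) else O2 (n / 2)

/-- `g(t) = Σ_{s=0}^t h_1(s) h_2(t−s)`. -/
def g (t : ℕ) : ℝ := ∑ s ∈ Finset.range (t + 1), h1 s * h2 (t - s)

/-- `ν(m)`. -/
def ν (m : ℕ) : ℝ :=
  2 * Real.log 6 + 2 * Real.log 2 * (m : ℝ) + 2 * (m : ℝ) * Real.log (m : ℝ) +
    2 * (m : ℝ) * Real.log (Real.log (m : ℝ)) +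
    5 * (m : ℝ) * Real.log (Real.log (m : ℝ)) / Real.log (m : ℝ)

/-- `ĝ(m)`. -/
def ghat (m : ℕ) : ℝ := 1 / 24 * (36 / π ^ 2 * ν m ^ 2 + 1)

/-- `α_k = (π/6)√(24k−1)`. -/
def αk (k : ℕ) : ℝ := π / 6 * Real.sqrt (24 * (k : ℝ) - 1)

/-- `C_1(k)`. -/
def C1 (k : ℕ) : ℝ :=
  3 * (k : ℝ) * (3 * (⌈Real.sqrt (k : ℝ)⌉₊ : ℝ) + 1) ^ 2 *
      αk k ^ (6 * ⌈Real.sqrt (k : ℝ)⌉₊ + 4) /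
    (2 * (⌈Real.sqrt (k : ℝ)⌉₊ : ℝ) * (Nat.factorial (6 * ⌈Real.sqrt (k : ℝ)⌉₊ + 4) : ℝ))

/-- `C_1*(k)`. -/
def C1s (k : ℕ) : ℝ :=
  (αk k ^ 2 * (Real.cosh (αk k) - 1) + 4 * C1 k) / (4 * |Real.cos (αk k)|)

/-- `C_2(k)`. -/
def C2 (k : ℕ) : ℝ :=
  9 * (k : ℝ) * (3 * (⌈Real.sqrt (k : ℝ)⌉₊ : ℝ) + 1) ^ 2 *
      αk k ^ (6 * ⌈Real.sqrt (k : ℝ)⌉₊ + 3) /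
    ((6 * (⌈Real.sqrt (k : ℝ)⌉₊ : ℝ) + 1) * (Nat.factorial (6 * ⌈Real.sqrt (k : ℝ)⌉₊ + 3) : ℝ))

/-- `C_2*(k)`. -/
def C2s (k : ℕ) : ℝ :=
  1 / 2 * (1 + 3 * (αk k ^ 2 * Real.sinh (αk k) + 4 * C2 k) / (4 * |Real.sin (αk k)|))

/-- `C_e(k)`. -/
def Ce (k : ℕ) : ℝ := 2 * C2s k + (24 * (k : ℝ) - 1) * (1 + C2s k) / 6

/-- `C_o(k)`. -/
def Co (k : ℕ) : ℝ := 2 * C1s k + (24 * (k : ℝ) - 1) * (1 + 2 * C1s k) / 6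

/-- `E_{N,1,e}(k)`. -/
def EN1e (N k : ℕ) : ℝ :=
  Real.sqrt 2 * |Real.sin (αk k)| / (Real.sqrt π * αk k) *
    ((24 * (k : ℝ) - 1) / 24) ^ (((N : ℝ) + 1) / 2) * Real.sqrt ((N : ℝ) + 1) *
    (1 + Ce k / (N : ℝ))

/-- `E_{N,1,o}(k)`. -/
def EN1o (N k : ℕ) : ℝ :=
  Real.sqrt (3 / π ^ 3) * |Real.cos (αk k)| *
    ((24 * (k : ℝ) - 1) / 24) ^ ((N : ℝ) / 2) * Real.sqrt ((N : ℝ) + 2) *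
    (1 + Co k / (N : ℝ))

/-- `E_{N,1}(k)`. -/
def EN1 (N k : ℕ) : ℝ := EN1e N k + EN1o N k

/-- `C_1(α)`. -/
def Cal1 : ℝ :=
  3 * (Real.cosh (Real.sqrt (1 + αc ^ 2) - 1) + Real.sinh (Real.sqrt (1 + αc ^ 2) - 1)) /
    (2 * π ^ 2 * (1 + αc ^ 2))

/-- `C_2(α)`. -/
def Cal2 : ℝ :=
  1 / π * Real.sqrt (3 / 2) *
    (Real.cosh (Real.sqrt (1 + αc ^ 2) - 1) + Real.sinh (Real.sqrt (1 + αc ^ 2) - 1)) /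
    (1 + αc ^ 2) ^ ((3 : ℝ) / 2)

/-- `E_N^{[2]}`. -/
def EN2 (N : ℕ) : ℝ :=
  Cal1 * ((1 + αc ^ 2) / (24 * αc ^ 2)) ^ (((N : ℝ) - 1) / 2) * (1 + 8 / (N : ℝ)) +
  Cal2 * ((1 + αc ^ 2) / (24 * αc ^ 2)) ^ ((N : ℝ) / 2) * (1 + 3 / (N : ℝ)) +
  (6 / (π * Real.sqrt 24)) ^ (N + 1) * (1 + 4 / (N : ℝ))

/-- Coefficients `c_k(m) = Σ_{s=0}^m ω_k(s) g(m−s)`. -/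
def ck (k m : ℕ) : ℝ := ∑ s ∈ Finset.range (m + 1), ω k s * g (m - s)


lemma fact_succ_real (n : ℕ) : ((Nat.factorial (n+1) : ℝ)) = (n+1) * (Nat.factorial n : ℝ) := by
  rw [Nat.factorial_succ]; push_cast; ring

lemma my_nonneg_of_deriv (f f' : ℝ → ℝ) (hd : ∀ y, HasDerivAt f (f' y) y)
    (h0 : f 0 = 0) (hf' : ∀ y, 0 ≤ y → 0 ≤ f' y) {x : ℝ} (hx : 0 ≤ x) : 0 ≤ f x := by
  have hmono : MonotoneOn f (Set.Ici 0) := by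
    apply monotoneOn_of_deriv_nonneg (convex_Ici 0)
    · exact fun y _ => ((hd y).continuousAt).continuousWithinAt
    · intro y hy
      exact ((hd y).differentiableAt).differentiableWithinAt
    · intro y hy
      rw [(hd y).deriv]
      exact hf' y (le_of_lt (by simpa using hy))
  have := hmono (Set.self_mem_Ici) (Set.mem_Ici.mpr hx) hx
  linarith [h0 ▸ this]

lemma abs_step (f f' : ℝ → ℝ) (hd : ∀ y, HasDerivAt f (f' y) y) (h0 : f 0 = 0) (n : ℕ)
    (hb : ∀ y, 0 ≤ y → |f' y| ≤ y ^ n / (Nat.factorial n : ℝ)) :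
    ∀ x, 0 ≤ x → |f x| ≤ x ^ (n+1) / (Nat.factorial (n+1) : ℝ) := by
  intro x hx
  have hfact : (Nat.factorial n : ℝ) ≠ 0 := by positivity
  have hder : ∀ y : ℝ, HasDerivAt (fun y : ℝ => y ^ (n+1) / (Nat.factorial (n+1) : ℝ))
      (y ^ n / (Nat.factorial n : ℝ)) y := by
    intro y
    have h := (hasDerivAt_pow (n+1) y).div_const ((Nat.factorial (n+1) : ℝ))
    refine h.congr_deriv ?_; symm
    rw [fact_succ_real n]
    push_cast
    field_simp
  have h1 : 0 ≤ x ^ (n+1) / (Nat.factorial (n+1) : ℝ) - f x := by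
    apply my_nonneg_of_deriv _ (fun y => y ^ n / (Nat.factorial n : ℝ) - f' y)
      (fun y => (hder y).sub (hd y)) (by simp [h0]) _ hx
    intro y hy
    have := hb y hy
    have := abs_le.mp this
    linarith [this.2]
  have h2 : 0 ≤ x ^ (n+1) / (Nat.factorial (n+1) : ℝ) + f x := by
    apply my_nonneg_of_deriv _ (fun y => y ^ n / (Nat.factorial n : ℝ) + f' y)
      (fun y => (hder y).add (hd y)) (by simp [h0]) _ hx
    intro y hy
    have := abs_le.mp (hb y hy)
    linarith [this.1]
  rw [abs_le]
  constructor <;> linarith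

noncomputable def ssin (N : ℕ) (x : ℝ) : ℝ := ∑ m ∈ range (N + 1), (-1 : ℝ) ^ m * x ^ (2 * m + 1) / (Nat.factorial (2 * m + 1) : ℝ)
noncomputable def scos (N : ℕ) (x : ℝ) : ℝ := ∑ m ∈ range (N + 1), (-1 : ℝ) ^ m * x ^ (2 * m) / (Nat.factorial (2 * m) : ℝ)


lemma hasDerivAt_ssin (N : ℕ) (x : ℝ) : HasDerivAt (ssin N) (scos N x) x := by
  unfold ssin scos
  have : ∀ m ∈ range (N+1), HasDerivAt (fun y : ℝ => (-1 : ℝ) ^ m * y ^ (2 * m + 1) / (Nat.factorial (2 * m + 1) : ℝ))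
      ((-1 : ℝ) ^ m * x ^ (2 * m) / (Nat.factorial (2 * m) : ℝ)) x := by
    intro m _
    have h := ((hasDerivAt_pow (2*m+1) x).const_mul ((-1:ℝ)^m)).div_const ((Nat.factorial (2*m+1) : ℝ))
    refine h.congr_deriv ?_; symm
    rw [fact_succ_real (2*m)]
    have h1 : (Nat.factorial (2*m) : ℝ) ≠ 0 := by positivity
    push_cast
    field_simp
  exact HasDerivAt.fun_sum this

lemma hasDerivAt_scos (N : ℕ) (x : ℝ) : HasDerivAt (scos (N+1)) (-(ssin N x)) x := by
  unfold ssin scos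
  have key : ∀ m ∈ range (N+2), HasDerivAt (fun y : ℝ => (-1 : ℝ) ^ m * y ^ (2 * m) / (Nat.factorial (2 * m) : ℝ))
      ((-1 : ℝ) ^ m * (((2*m : ℕ) : ℝ) * x ^ (2 * m - 1)) / (Nat.factorial (2 * m) : ℝ)) x := by
    intro m _
    exact ((hasDerivAt_pow (2*m) x).const_mul ((-1:ℝ)^m)).div_const _
  have h := HasDerivAt.fun_sum key
  refine h.congr_deriv ?_; symm
  rw [Finset.sum_range_succ' (fun m => (-1 : ℝ) ^ m * (((2*m : ℕ) : ℝ) * x ^ (2 * m - 1)) / (Nat.factorial (2 * m) : ℝ)) (N+1)]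
  have h0 : ((-1:ℝ)^(0:ℕ) * (((2*0 : ℕ) : ℝ) * x ^ (2 * 0 - 1)) / (Nat.factorial (2 * 0) : ℝ)) = 0 := by norm_num
  rw [h0, add_zero, ← neg_inj, neg_neg, ← Finset.sum_neg_distrib]
  apply Finset.sum_congr rfl
  intro m _
  have e1 : 2 * (m+1) - 1 = 2*m+1 := by omega
  have e2 : 2 * (m+1) = (2*m+1) + 1 := by omega
  rw [e1, e2, fact_succ_real (2*m+1)]
  have h1 : (Nat.factorial (2*m+1) : ℝ) ≠ 0 := by positivity
  push_cast
  field_simp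
  ring


lemma ssin_zero (N : ℕ) : ssin N 0 = 0 := by
  unfold ssin; apply Finset.sum_eq_zero; intro m _; simp

lemma scos_zero (N : ℕ) : scos N 0 = 1 := by
  unfold scos
  rw [Finset.sum_range_succ']
  simp

lemma sin_cos_bounds (N : ℕ) :
    (∀ x : ℝ, 0 ≤ x → |Real.cos x - scos N x| ≤ x ^ (2*N+2) / (Nat.factorial (2*N+2) : ℝ)) ∧
    (∀ x : ℝ, 0 ≤ x → |Real.sin x - ssin N x| ≤ x ^ (2*N+3) / (Nat.factorial (2*N+3) : ℝ)) := by
  induction N with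
  | zero =>
    have hcos : ∀ x : ℝ, 0 ≤ x → |Real.cos x - scos 0 x| ≤ x ^ 2 / (Nat.factorial 2 : ℝ) := by
      intro x hx
      have h1 : Real.cos x ≤ 1 := Real.cos_le_one x
      have h2 : 1 - x^2/2 ≤ Real.cos x := Real.one_sub_sq_div_two_le_cos
      have hs : scos 0 x = 1 := by unfold scos; simp
      rw [hs, abs_le]
      norm_num [Nat.factorial]
      constructor <;> nlinarith
    refine ⟨by simpa using hcos, ?_⟩
    have := abs_step (fun x => Real.sin x - ssin 0 x) (fun x => Real.cos x - scos 0 x)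
      (fun y => (Real.hasDerivAt_sin y).sub (hasDerivAt_ssin 0 y))
      (by simp [ssin_zero]) 2 (by simpa using hcos)
    simpa using this
  | succ N ih =>
    have hcos : ∀ x : ℝ, 0 ≤ x → |Real.cos x - scos (N+1) x| ≤ x ^ (2*(N+1)+2) / (Nat.factorial (2*(N+1)+2) : ℝ) := by
      have h := abs_step (fun x => Real.cos x - scos (N+1) x) (fun x => -(Real.sin x - ssin N x))
        (fun y => by
          have := (Real.hasDerivAt_cos y).sub (hasDerivAt_scos N y)
          refine this.congr_deriv ?_
          ring)
        (by simp [scos_zero]) (2*N+3)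
        (by intro y hy; rw [abs_neg]; exact ih.2 y hy)
      intro x hx
      have hx2 := h x hx
      rw [show 2*(N+1)+2 = 2*N+3+1 by omega]; exact hx2
    refine ⟨hcos, ?_⟩
    have h := abs_step (fun x => Real.sin x - ssin (N+1) x) (fun x => Real.cos x - scos (N+1) x)
      (fun y => (Real.hasDerivAt_sin y).sub (hasDerivAt_ssin (N+1) y))
      (by simp [ssin_zero]) (2*(N+1)+2) hcos
    intro x hx
    have hx2 := h x hx
    rw [show 2*(N+1)+3 = 2*(N+1)+2+1 by omega]; exact hx2


noncomputable def psinh (N : ℕ) (x : ℝ) : ℝ := ∑ m ∈ range (N + 1), x ^ (2 * m + 1) / (Nat.factorial (2 * m + 1) : ℝ)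
noncomputable def pcosh (N : ℕ) (x : ℝ) : ℝ := ∑ m ∈ range (N + 1), x ^ (2 * m) / (Nat.factorial (2 * m) : ℝ)

lemma psinh_zero (N : ℕ) : psinh N 0 = 0 := by
  unfold psinh; apply Finset.sum_eq_zero; intro m _; simp

lemma pcosh_zero (N : ℕ) : pcosh N 0 = 1 := by
  unfold pcosh; rw [Finset.sum_range_succ']; simp

lemma hasDerivAt_psinh (N : ℕ) (x : ℝ) : HasDerivAt (psinh N) (pcosh N x) x := by
  unfold psinh pcosh
  have : ∀ m ∈ range (N+1), HasDerivAt (fun y : ℝ => y ^ (2 * m + 1) / (Nat.factorial (2 * m + 1) : ℝ))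
      (x ^ (2 * m) / (Nat.factorial (2 * m) : ℝ)) x := by
    intro m _
    have h := (hasDerivAt_pow (2*m+1) x).div_const ((Nat.factorial (2*m+1) : ℝ))
    refine h.congr_deriv ?_; symm
    rw [fact_succ_real (2*m)]
    have h1 : (Nat.factorial (2*m) : ℝ) ≠ 0 := by positivity
    push_cast
    field_simp
  exact HasDerivAt.fun_sum this

lemma hasDerivAt_pcosh (N : ℕ) (x : ℝ) : HasDerivAt (pcosh (N+1)) (psinh N x) x := by
  unfold psinh pcosh
  have key : ∀ m ∈ range (N+2), HasDerivAt (fun y : ℝ => y ^ (2 * m) / (Nat.factorial (2 * m) : ℝ))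
      ((((2*m : ℕ) : ℝ) * x ^ (2 * m - 1)) / (Nat.factorial (2 * m) : ℝ)) x := by
    intro m _
    exact (hasDerivAt_pow (2*m) x).div_const _
  have h := HasDerivAt.fun_sum key
  refine h.congr_deriv ?_; symm
  rw [Finset.sum_range_succ' (fun m => (((2*m : ℕ) : ℝ) * x ^ (2 * m - 1)) / (Nat.factorial (2 * m) : ℝ)) (N+1)]
  have h0 : ((((2*0 : ℕ) : ℝ) * x ^ (2 * 0 - 1)) / (Nat.factorial (2 * 0) : ℝ)) = 0 := by norm_num
  rw [h0, add_zero]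
  apply Finset.sum_congr rfl
  intro m _
  have e1 : 2 * (m+1) - 1 = 2*m+1 := by omega
  have e2 : 2 * (m+1) = (2*m+1) + 1 := by omega
  rw [e1, e2, fact_succ_real (2*m+1)]
  have h1 : (Nat.factorial (2*m+1) : ℝ) ≠ 0 := by positivity
  push_cast
  field_simp

lemma sinh_cosh_partial (N : ℕ) :
    (∀ x : ℝ, 0 ≤ x → pcosh N x ≤ Real.cosh x) ∧ (∀ x : ℝ, 0 ≤ x → psinh N x ≤ Real.sinh x) := by
  induction N with
  | zero =>
    have hc : ∀ x : ℝ, 0 ≤ x → pcosh 0 x ≤ Real.cosh x := by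
      intro x hx
      have : pcosh 0 x = 1 := by unfold pcosh; simp
      rw [this]; exact Real.one_le_cosh x
    refine ⟨hc, fun x hx => ?_⟩
    have h0 : (0:ℝ) ≤ Real.sinh x - psinh 0 x := by
      apply my_nonneg_of_deriv _ (fun y => Real.cosh y - pcosh 0 y)
        (fun y => (Real.hasDerivAt_sinh y).sub (hasDerivAt_psinh 0 y)) (by simp [psinh_zero]) _ hx
      intro y hy; linarith [hc y hy]
    linarith
  | succ N ih =>
    have hc : ∀ x : ℝ, 0 ≤ x → pcosh (N+1) x ≤ Real.cosh x := by
      intro x hx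
      have h0 : (0:ℝ) ≤ Real.cosh x - pcosh (N+1) x := by
        apply my_nonneg_of_deriv _ (fun y => Real.sinh y - psinh N y)
          (fun y => (Real.hasDerivAt_cosh y).sub (hasDerivAt_pcosh N y)) (by simp [pcosh_zero]) _ hx
        intro y hy; linarith [ih.2 y hy]
      linarith
    refine ⟨hc, fun x hx => ?_⟩
    have h0 : (0:ℝ) ≤ Real.sinh x - psinh (N+1) x := by
      apply my_nonneg_of_deriv _ (fun y => Real.cosh y - pcosh (N+1) y)
        (fun y => (Real.hasDerivAt_sinh y).sub (hasDerivAt_psinh (N+1) y)) (by simp [psinh_zero]) _ hx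
      intro y hy; linarith [hc y hy]
    linarith


lemma sqrt_pi_le_stirling (n : ℕ) : Real.sqrt π ≤ Stirling.stirlingSeq (n+1) := by
  have ht : Filter.Tendsto (fun m : ℕ => Stirling.stirlingSeq (m+1)) Filter.atTop (nhds (Real.sqrt π)) := by
    have := Stirling.tendsto_stirlingSeq_sqrt_pi
    exact this.comp (Filter.tendsto_add_atTop_nat 1)
  exact Stirling.stirlingSeq'_antitone.le_of_tendsto ht n

lemma stirling_fact (n : ℕ) (hn : 1 ≤ n) :
    (Nat.factorial n : ℝ) = Stirling.stirlingSeq n * Real.sqrt (2*n) * ((n : ℝ)/Real.exp 1)^n := by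
  have h1 : (0:ℝ) < Real.sqrt (2*n) := by
    apply Real.sqrt_pos.mpr; positivity
  have h2 : (0:ℝ) < ((n : ℝ)/Real.exp 1)^n := by
    apply pow_pos; positivity
  rw [Stirling.stirlingSeq]
  field_simp

lemma central_binom_le (t : ℕ) (ht : 1 ≤ t) :
    (Nat.choose (2*t) t : ℝ) ≤ 4^t / Real.sqrt (π * t) := by
  have hfac : Nat.choose (2*t) t * Nat.factorial t * Nat.factorial t = Nat.factorial (2*t) := by
    have := Nat.choose_mul_factorial_mul_factorial (show t ≤ 2*t by omega)
    rwa [show 2*t - t = t by omega] at this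
  have hreal : (Nat.choose (2*t) t : ℝ) * (Nat.factorial t : ℝ) * (Nat.factorial t : ℝ) = (Nat.factorial (2*t) : ℝ) := by
    exact_mod_cast congrArg (Nat.cast : ℕ → ℝ) hfac
  set a1 := Stirling.stirlingSeq t with ha1
  set a2 := Stirling.stirlingSeq (2*t) with ha2
  have hsp : Real.sqrt π ≤ a1 := by
    have := sqrt_pi_le_stirling (t-1); rwa [show t-1+1 = t by omega] at this
  have hsp2 : Real.sqrt π ≤ a2 := by
    have := sqrt_pi_le_stirling (2*t-1); rwa [show 2*t-1+1 = 2*t by omega] at this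
  have ha12 : a2 ≤ a1 := by
    have := Stirling.stirlingSeq'_antitone (show t-1 ≤ 2*t-1 by omega)
    simpa [Function.comp, show t-1+1 = t by omega, show 2*t-1+1 = 2*t by omega] using this
  have hπ : (0:ℝ) < Real.sqrt π := Real.sqrt_pos.mpr Real.pi_pos
  have ha1pos : 0 < a1 := lt_of_lt_of_le hπ hsp
  have ha2pos : 0 < a2 := lt_of_lt_of_le hπ hsp2
  have htR : (0:ℝ) < (t:ℝ) := by exact_mod_cast ht
  have hst : (0:ℝ) < Real.sqrt t := Real.sqrt_pos.mpr htR
  set P := ((t : ℝ)/Real.exp 1)^t with hP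
  have hPpos : 0 < P := pow_pos (by positivity) t
  have e1 : (Nat.factorial t : ℝ) = a1 * Real.sqrt (2*t) * P := stirling_fact t ht
  have e2 := stirling_fact (2*t) (by omega : 1 ≤ 2*t)
  have e3 : (((2*t : ℕ):ℝ)/Real.exp 1)^(2*t) = 4^t * P^2 := by
    have h1 : ((2*t : ℕ):ℝ)/Real.exp 1 = 2 * ((t:ℝ)/Real.exp 1) := by push_cast; ring
    rw [h1, mul_pow, hP, ← pow_mul, mul_comm 2 t, pow_mul ((t:ℝ)/Real.exp 1) t 2,
      show (2:ℝ)^(t*2) = 4^t from by rw [mul_comm t 2, pow_mul]; norm_num]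
  have e4 : Real.sqrt (2*((2*t : ℕ):ℝ)) = 2 * Real.sqrt t := by
    push_cast
    rw [show (2:ℝ)*(2*(t:ℝ)) = 2^2 * t by ring, Real.sqrt_mul (by positivity), Real.sqrt_sq (by norm_num)]
  rw [e3, e4] at e2
  have e5 : Real.sqrt (2*(t:ℝ)) ^ 2 = 2 * t := Real.sq_sqrt (by positivity)
  set C := (Nat.choose (2*t) t : ℝ) with hCdef
  have key : C * (a1^2 * (2*(t:ℝ))) = a2 * (2 * Real.sqrt t) * 4^t := by
    apply mul_right_cancel₀ (pow_ne_zero 2 (ne_of_gt hPpos))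
    calc C * (a1^2 * (2*(t:ℝ))) * P^2 = C * (a1 * Real.sqrt (2*(t:ℝ)) * P) * (a1 * Real.sqrt (2*(t:ℝ)) * P) := by
          linear_combination (-(C * a1^2 * P^2)) * e5
      _ = a2 * (2 * Real.sqrt t) * (4^t * P^2) := by rw [← e1, hreal, e2]
      _ = a2 * (2 * Real.sqrt t) * 4^t * P^2 := by ring
  have hts : Real.sqrt (t:ℝ) * Real.sqrt t = t := Real.mul_self_sqrt (le_of_lt htR)
  have hsqrtpit : Real.sqrt (π * t) = Real.sqrt π * Real.sqrt t := Real.sqrt_mul (le_of_lt Real.pi_pos) t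
  rw [hsqrtpit, le_div_iff₀ (by positivity)]
  apply le_of_mul_le_mul_right _ (show (0:ℝ) < a1^2*(2*(t:ℝ)) by positivity)
  calc C * (Real.sqrt π * Real.sqrt t) * (a1^2*(2*(t:ℝ)))
      = (C * (a1^2 * (2*(t:ℝ)))) * (Real.sqrt π * Real.sqrt t) := by ring
    _ = a2 * (2 * Real.sqrt t) * 4^t * (Real.sqrt π * Real.sqrt t) := by rw [key]
    _ = (a2 * Real.sqrt π) * (Real.sqrt t * Real.sqrt t) * 2 * 4^t := by ring
    _ = (a2 * Real.sqrt π) * (2*(t:ℝ)) * 4^t := by rw [hts]; ring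
    _ ≤ (a1 * a1) * (2*(t:ℝ)) * 4^t := by
        apply mul_le_mul_of_nonneg_right _ (by positivity)
        apply mul_le_mul_of_nonneg_right _ (by positivity)
        nlinarith
    _ = 4 ^ t * (a1^2*(2*(t:ℝ))) := by ring


lemma tele_aux (t : ℕ) : ∀ j, j ≤ t →
    ∑ i ∈ range (j+1), (2*(t-i)+1) * Nat.choose (2*t+1) i = (2*t+1-j) * Nat.choose (2*t+1) j := by
  intro j
  induction j with
  | zero => simp
  | succ j ih =>
    intro hj
    rw [Finset.sum_range_succ, ih (by omega)]
    have h1 : Nat.choose (2*t+1) (j+1) * (j+1) = Nat.choose (2*t+1) j * (2*t+1-j) := Nat.choose_succ_right_eq _ _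
    have h2 : 2*(t-(j+1))+1 = 2*t+1-(j+1) - (j+1) := by omega
    -- goal: (2t+1-j)*C(j) + (2(t-(j+1))+1)*C(j+1) = (2t+1-(j+1))*C(j+1)
    have h3 : (2*t+1-j) * Nat.choose (2*t+1) j = (j+1) * Nat.choose (2*t+1) (j+1) := by
      calc (2*t+1-j) * Nat.choose (2*t+1) j = Nat.choose (2*t+1) j * (2*t+1-j) := mul_comm _ _
        _ = Nat.choose (2*t+1) (j+1) * (j+1) := h1.symm
        _ = (j+1) * Nat.choose (2*t+1) (j+1) := mul_comm _ _
    rw [h3]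
    have h4 : 2*(t-(j+1))+1 = 2*t - 2*j - 1 := by omega
    rw [h4]
    have h5 : 2*t+1-(j+1) = (j+1) + (2*t-2*j-1) := by omega
    rw [h5]; ring

lemma tele_sum (t : ℕ) :
    ∑ N ∈ range (t+1), (2*N+1) * Nat.choose (2*t+1) (t-N) = (t+1) * Nat.choose (2*t+1) t := by
  have h := Finset.sum_range_reflect (fun i => (2*(t-i)+1) * Nat.choose (2*t+1) i) (t+1)
  -- h : ∑ j ∈ range (t+1), f (t+1-1-j) = ∑ j ∈ range (t+1), f j
  have h2 : ∑ N ∈ range (t+1), (2*N+1) * Nat.choose (2*t+1) (t-N)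
      = ∑ j ∈ range (t+1), (2*(t-j)+1) * Nat.choose (2*t+1) j := by
    rw [← h]
    apply Finset.sum_congr rfl
    intro N hN
    have hN' : N ≤ t := by simpa using Nat.lt_succ_iff.mp (Finset.mem_range.mp hN)
    congr 2 <;> omega
  rw [h2, tele_aux t t le_rfl]
  congr 1
  omega

lemma step_down (t i : ℕ) (h : i < t) :
    (t+1+i) * Nat.choose (2*t+1) (t-i) = (2*i+1) * Nat.choose (2*t+1) (t-i) + (t+2+i) * Nat.choose (2*t+1) (t-(i+1)) := by
  have h1 : Nat.choose (2*t+1) (t-i-1+1) * (t-i-1+1) = Nat.choose (2*t+1) (t-i-1) * (2*t+1-(t-i-1)) :=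
    Nat.choose_succ_right_eq _ _
  have e1 : t-i-1+1 = t-i := by omega
  have e2 : 2*t+1-(t-i-1) = t+2+i := by omega
  rw [e1, e2] at h1
  have e3 : t-(i+1) = t-i-1 := by omega
  rw [e3]
  have e4 : t+1+i = (2*i+1) + (t-i) := by omega
  rw [e4, add_mul]
  congr 1
  rw [mul_comm (t-i) _, h1, mul_comm]

lemma choose_mid_le (t : ℕ) : Nat.choose (2*t+1) t * (t+1) = (2*t+1) * Nat.choose (2*t) t := by
  have h := Nat.add_one_mul_choose_eq (2*t) t
  -- succ (2t) * choose (2t) t = choose (2t+1) (t+1) * (t+1)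
  have hsymm : Nat.choose (2*t+1) (t+1) = Nat.choose (2*t+1) t := by
    rw [← Nat.choose_symm (show t+1 ≤ 2*t+1 by omega)]
    congr 1
    omega
  rw [← hsymm]
  omega

lemma choose_succ_le_two (t : ℕ) : Nat.choose (2*t+1) t ≤ 2 * Nat.choose (2*t) t := by
  have h := choose_mid_le t
  nlinarith [Nat.choose_pos (show t ≤ 2*t by omega)]


lemma omega_eq (k t : ℕ) (hk : 0 < k) :
    ω k (2*t) = ((24*(k:ℝ)-1)/24)^t / (4^t * αk k) *
      ((-1:ℝ)^t * ∑ m ∈ range (t+1), (((t+1+m) * Nat.choose (2*t+1) (t-m) : ℕ) : ℝ) *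
        ((-1:ℝ)^m * (αk k)^(2*m+1) / (Nat.factorial (2*m+1) : ℝ))) := by
  have hk1 : (1:ℝ) ≤ (k:ℝ) := by exact_mod_cast hk
  have hw : (0:ℝ) < 24*(k:ℝ)-1 := by linarith
  set w : ℝ := 24*(k:ℝ)-1 with hwdef
  have hα : 0 < αk k := by
    unfold αk
    rw [← hwdef]
    have h1 := Real.pi_pos
    have h2 : 0 < Real.sqrt w := Real.sqrt_pos.mpr hw
    positivity
  set α : ℝ := αk k with hαdef
  have hα2 : α^2 = ((π/6):ℝ)^2 * w := by
    rw [hαdef]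
    unfold αk
    rw [← hwdef, mul_pow, Real.sq_sqrt (le_of_lt hw)]
  have hαne : α ≠ 0 := ne_of_gt hα
  have hwne : w ≠ 0 := ne_of_gt hw
  -- step 1
  have step1 : ω k (2*t) = ∑ l ∈ range (t+1), ((w/24)^t / (4^t*α) *
      ((-1:ℝ)^l * (Nat.choose (2*t+1) l : ℝ) * ((2*t+1-l : ℕ):ℝ) * α^(2*(t-l)+1) / (Nat.factorial (2*t+1-2*l) : ℝ))) := by
    unfold ω
    rw [← hwdef, show (2*t+1)/2 + 1 = t+1 by omega, Finset.mul_sum]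
    set q : ℝ := π/6 with hq
    apply Finset.sum_congr rfl
    intro l hl
    have hl' : l ≤ t := by
      have := Finset.mem_range.mp hl; omega
    have hz1 : (q:ℝ) ^ (((2*t:ℕ):ℤ) - 2*(l:ℤ)) = q^(2*(t-l)) := by
      rw [show ((2*t:ℕ):ℤ) - 2*(l:ℤ) = ((2*(t-l) : ℕ) : ℤ) by omega, zpow_natCast]
    have hz2 : w ^ (-(l:ℤ)) = ((w:ℝ)^l)⁻¹ := by rw [zpow_neg, zpow_natCast]
    have hpow : α^(2*(t-l)+1) = (q^2*w)^(t-l) * α := by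
      rw [pow_succ, pow_mul, hα2]
    have hb : ((w:ℝ)/(4*Real.sqrt 6))^(2*t) = (w^t * (w^(t-l) * w^l))/(24^t*4^t) := by
      rw [div_pow]
      congr 1
      · rw [← pow_add, ← pow_add]; congr 1; omega
      · rw [pow_mul, show ((4:ℝ)*Real.sqrt 6)^2 = 96 by
          rw [mul_pow, Real.sq_sqrt (by norm_num : (0:ℝ) ≤ 6)]; norm_num]
        rw [show (24:ℝ)^t*4^t = 96^t by rw [← mul_pow]; norm_num]
    rw [hz1, hz2, hpow, hb]
    clear_value q w α
    have hfne : ((Nat.factorial (2*t+1-2*l) : ℝ)) ≠ 0 := by positivity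
    have hwl : ((w:ℝ)^l) ≠ 0 := pow_ne_zero _ hwne
    simp only [div_pow]
    field_simp
    ring
  rw [step1, ← Finset.sum_range_reflect]
  conv_rhs => rw [Finset.mul_sum]
  conv_rhs => rw [Finset.mul_sum]
  apply Finset.sum_congr rfl
  intro m hm
  have hm' : m ≤ t := by have := Finset.mem_range.mp hm; omega
  have i1 : t + 1 - 1 - m = t - m := by omega
  rw [i1]
  have i2 : 2*t+1 - (t-m) = t+1+m := by omega
  have i3 : 2*(t-(t-m))+1 = 2*m+1 := by omega
  have i4 : 2*t+1-2*(t-m) = 2*m+1 := by omega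
  rw [i2, i3, i4]
  have i5 : ((-1:ℝ))^(t-m) = (-1)^t * (-1)^m := by
    have h1 : ((-1:ℝ))^(t+m) = (-1)^(t-m) := by
      rw [show t+m = (t-m)+2*m by omega, pow_add, pow_mul]
      norm_num
    rw [← pow_add, h1]
  rw [i5]
  push_cast
  ring


lemma final_arith (s a sh c2 u p T : ℝ) (hs : 0<s) (ha : 0<a) (hsh : 0 ≤ sh) (hc2 : 0 ≤ c2)
    (hu : 0<u) (hp : 0<p) (hT : 0<T) (hu2 : u*u = T) :
    (2*T+1)*s/(p*u*a) + 3*a*sh/(4*(p*u)) ≤ 2*u/(p*a)*s*(1 + (1/2*(1+3*(a^2*sh+4*c2)/(4*s)))/T) := by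
  subst hu2
  have expand : 2*u/(p*a)*s*(1 + (1/2*(1+3*(a^2*sh+4*c2)/(4*s)))/(u*u))
      = (2*(u*u)+1)*s/(p*u*a) + 3*a*sh/(4*(p*u)) + 3*c2/(p*u*a) := by
    field_simp
    ring
  rw [expand]
  have : 0 ≤ 3*c2/(p*u*a) := by positivity
  linarith


lemma w_pos (k : ℕ) (hk : 0 < k) : (0:ℝ) < 24*(k:ℝ)-1 := by
  have : (1:ℝ) ≤ (k:ℝ) := by exact_mod_cast hk
  linarith

lemma alphak_pos (k : ℕ) (hk : 0 < k) : 0 < αk k := by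
  unfold αk
  have h1 := Real.pi_pos
  have h2 : 0 < Real.sqrt (24*(k:ℝ)-1) := Real.sqrt_pos.mpr (w_pos k hk)
  positivity

lemma sin_alphak_ne (k : ℕ) (hk : 0 < k) : Real.sin (αk k) ≠ 0 := by
  intro h
  rw [Real.sin_eq_zero_iff] at h
  obtain ⟨n, hn⟩ := h
  have hπ : (π:ℝ) ≠ 0 := ne_of_gt Real.pi_pos
  have hsq : Real.sqrt (24*(k:ℝ)-1) = 6*(n:ℝ) := by
    unfold αk at hn
    have h2 : π * (6*(n:ℝ)) = π * Real.sqrt (24*(k:ℝ)-1) := by linarith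
    exact (mul_left_cancel₀ hπ h2).symm
  have hw : (24*(k:ℝ)-1) = 36*(n:ℝ)^2 := by
    have := Real.sq_sqrt (le_of_lt (w_pos k hk))
    rw [hsq] at this
    nlinarith [this]
  have hz : (24*(k:ℤ)-1) = 36*n^2 := by exact_mod_cast hw
  set j : ℤ := n^2
  omega

lemma C2_nonneg (k : ℕ) (hk : 0 < k) : 0 ≤ C2 k := by
  have hα := alphak_pos k hk
  unfold C2
  apply div_nonneg
  · apply mul_nonneg
    · apply mul_nonneg
      · positivity
      · positivity
    · exact pow_nonneg (le_of_lt hα) _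
  · positivity

lemma D0_val (t : ℕ) : (((t+1+0) * Nat.choose (2*t+1) (t-0) : ℕ) : ℝ) = ((2*t+1 : ℕ) : ℝ) * (Nat.choose (2*t) t : ℝ) := by
  have h2 : (t+1+0) * Nat.choose (2*t+1) (t-0) = (2*t+1) * Nat.choose (2*t) t := by
    simp only [Nat.sub_zero, Nat.add_zero]
    rw [mul_comm]
    exact choose_mid_le t
  exact_mod_cast congrArg (Nat.cast : ℕ → ℝ) h2

lemma factor_ineq (i : ℕ) : (2*(i:ℝ)+1) * 2 / (Nat.factorial (2*i+3) : ℝ) ≤ (3/4) / (Nat.factorial (2*i+1) : ℝ) := by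
  have h3 : (Nat.factorial (2*i+3) : ℝ) = (2*(i:ℝ)+3)*((2*(i:ℝ)+2)*(Nat.factorial (2*i+1) : ℝ)) := by
    rw [show 2*i+3 = (2*i+2)+1 by ring, fact_succ_real, show 2*i+2 = (2*i+1)+1 by ring, fact_succ_real]
    push_cast
    ring
  rw [h3, div_le_div_iff₀ (by positivity) (by positivity)]
  have h0 : (0:ℝ) ≤ (i:ℝ) := Nat.cast_nonneg i
  have hf : (0:ℝ) < (Nat.factorial (2*i+1) : ℝ) := by positivity
  nlinarith [mul_pos hf (mul_pos hf hf), sq_nonneg ((i:ℝ))]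

/-- bound on the even-index coefficients `ω_k(2t)`. -/
theorem omega_even_bound (k t : ℕ) (hk : 0 < k) (ht : 0 < t) :
    |ω k (2 * t)| ≤
      ((24 * (k : ℝ) - 1) / 24) ^ t * (2 * Real.sqrt (t : ℝ) / (Real.sqrt π * αk k)) *
        |Real.sin (αk k)| * (1 + C2s k / (t : ℝ)) := by
  have hw : (0:ℝ) < 24*(k:ℝ)-1 := w_pos k hk
  have hα : 0 < αk k := alphak_pos k hk
  have hαne : αk k ≠ 0 := ne_of_gt hα
  have hsinne : Real.sin (αk k) ≠ 0 := sin_alphak_ne k hk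
  set α := αk k with hαdef
  set s := |Real.sin α| with hsdef
  have hs : 0 < s := abs_pos.mpr hsinne
  have htR : (0:ℝ) < (t:ℝ) := by exact_mod_cast ht
  have hu : 0 < Real.sqrt (t:ℝ) := Real.sqrt_pos.mpr htR
  have hp : 0 < Real.sqrt π := Real.sqrt_pos.mpr Real.pi_pos
  have hpt : Real.sqrt (π*(t:ℝ)) = Real.sqrt π * Real.sqrt (t:ℝ) := Real.sqrt_mul (le_of_lt Real.pi_pos) _
  have hptpos : 0 < Real.sqrt (π*(t:ℝ)) := by rw [hpt]; positivity
  have hsinh : 0 ≤ Real.sinh α := by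
    rw [Real.sinh_nonneg_iff]; exact le_of_lt hα
  set D : ℕ → ℝ := fun m => (((t+1+m) * Nat.choose (2*t+1) (t-m) : ℕ) : ℝ) with hD
  set E : ℕ → ℝ := fun i => (((2*i+1) * Nat.choose (2*t+1) (t-i) : ℕ) : ℝ) with hE
  set g : ℕ → ℝ := fun m => (-1:ℝ)^m * α^(2*m+1) / (Nat.factorial (2*m+1) : ℝ) with hg
  have hEnn : ∀ i, 0 ≤ E i := fun i => Nat.cast_nonneg _
  have hDnn : ∀ i, 0 ≤ D i := fun i => Nat.cast_nonneg _
  -- summation by parts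
  have hby : ∑ m ∈ range (t+1), D m * g m = ∑ i ∈ range (t+1), E i * ssin i α := by
    have h := Finset.sum_range_by_parts D g (t+1)
    simp only [smul_eq_mul, Nat.add_sub_cancel] at h
    have hssin : ∀ i, ssin i α = ∑ j ∈ range (i+1), g j := fun i => rfl
    have hDt : D t = E t := by
      simp only [hD, hE]
      congr 2
      omega
    have hstep : ∀ i ∈ range t, (D (i+1) - D i) * (∑ j ∈ range (i+1), g j) = -(E i * ssin i α) := by
      intro i hi
      have hi' : i < t := Finset.mem_range.mp hi
      have hnat := step_down t i hi'
      rw [show t+2+i = t+1+(i+1) by omega] at hnat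
      have hreal : D i = E i + D (i+1) := by
        simp only [hD, hE]
        exact_mod_cast congrArg (Nat.cast : ℕ → ℝ) hnat
      rw [hssin i]
      have : D (i+1) - D i = -(E i) := by rw [hreal]; ring
      rw [this]
      ring
    rw [h, Finset.sum_congr rfl hstep, Finset.sum_neg_distrib, sub_neg_eq_add,
      Finset.sum_range_succ (fun i => E i * ssin i α) t, hssin t, hDt]
    ring
  -- sum of E equals D 0
  have hEsum : ∑ i ∈ range (t+1), E i = D 0 := by
    simp only [hE, hD]
    rw [← Nat.cast_sum]
    exact_mod_cast congrArg (Nat.cast : ℕ → ℝ) (by simpa using tele_sum t)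
  -- remainder bound
  have hrem : |(∑ i ∈ range (t+1), E i * ssin i α) - D 0 * Real.sin α|
      ≤ ∑ i ∈ range (t+1), E i * (α^(2*i+3)/(Nat.factorial (2*i+3) : ℝ)) := by
    rw [← hEsum, Finset.sum_mul, ← Finset.sum_sub_distrib]
    refine (Finset.abs_sum_le_sum_abs _ _).trans ?_
    apply Finset.sum_le_sum
    intro i _
    rw [← mul_sub, abs_mul, abs_of_nonneg (hEnn i)]
    apply mul_le_mul_of_nonneg_left _ (hEnn i)
    rw [abs_sub_comm]
    exact (sin_cos_bounds i).2 α (le_of_lt hα)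
  -- total error bound
  have herr : ∑ i ∈ range (t+1), E i * (α^(2*i+3)/(Nat.factorial (2*i+3) : ℝ))
      ≤ 3/(4*Real.sqrt (π*(t:ℝ))) * 4^t * (α^2 * Real.sinh α) := by
    have hCmid : (Nat.choose (2*t+1) t : ℝ) ≤ 2 * (4^t / Real.sqrt (π*(t:ℝ))) := by
      calc (Nat.choose (2*t+1) t : ℝ) ≤ 2 * (Nat.choose (2*t) t : ℝ) := by
            exact_mod_cast choose_succ_le_two t
        _ ≤ 2 * (4^t / Real.sqrt (π*(t:ℝ))) := by
            have := central_binom_le t ht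
            linarith
    have hterm : ∀ i ∈ range (t+1), E i * (α^(2*i+3)/(Nat.factorial (2*i+3) : ℝ))
        ≤ 3/(4*Real.sqrt (π*(t:ℝ))) * 4^t * (α^2 * (α^(2*i+1)/(Nat.factorial (2*i+1) : ℝ))) := by
      intro i _
      have hmid : (Nat.choose (2*t+1) (t-i) : ℝ) ≤ (Nat.choose (2*t+1) t : ℝ) := by
        have := Nat.choose_le_middle (t-i) (2*t+1)
        rw [show (2*t+1)/2 = t by omega] at this
        exact_mod_cast this
      have hE1 : E i ≤ (2*(i:ℝ)+1) * (2 * (4^t / Real.sqrt (π*(t:ℝ)))) := by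
        simp only [hE]
        push_cast
        calc (2*(i:ℝ)+1) * (Nat.choose (2*t+1) (t-i) : ℝ) ≤ (2*(i:ℝ)+1) * (Nat.choose (2*t+1) t : ℝ) := by
              apply mul_le_mul_of_nonneg_left hmid (by positivity)
          _ ≤ (2*(i:ℝ)+1) * (2 * (4^t / Real.sqrt (π*(t:ℝ)))) := by
              apply mul_le_mul_of_nonneg_left hCmid (by positivity)
      have hxpos : 0 ≤ α^(2*i+3)/(Nat.factorial (2*i+3) : ℝ) := by positivity
      calc E i * (α^(2*i+3)/(Nat.factorial (2*i+3) : ℝ))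
          ≤ ((2*(i:ℝ)+1) * (2 * (4^t / Real.sqrt (π*(t:ℝ))))) * (α^(2*i+3)/(Nat.factorial (2*i+3) : ℝ)) := by
            apply mul_le_mul_of_nonneg_right hE1 hxpos
        _ = ((2*(i:ℝ)+1) * 2 / (Nat.factorial (2*i+3) : ℝ)) * ((4^t / Real.sqrt (π*(t:ℝ))) * α^(2*i+3)) := by
            ring
        _ ≤ ((3/4) / (Nat.factorial (2*i+1) : ℝ)) * ((4^t / Real.sqrt (π*(t:ℝ))) * α^(2*i+3)) := by
            apply mul_le_mul_of_nonneg_right (factor_ineq i) (by positivity)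
        _ = 3/(4*Real.sqrt (π*(t:ℝ))) * 4^t * (α^2 * (α^(2*i+1)/(Nat.factorial (2*i+1) : ℝ))) := by
            rw [show 2*i+3 = 2+(2*i+1) by ring, pow_add]
            field_simp
    calc ∑ i ∈ range (t+1), E i * (α^(2*i+3)/(Nat.factorial (2*i+3) : ℝ))
        ≤ ∑ i ∈ range (t+1), 3/(4*Real.sqrt (π*(t:ℝ))) * 4^t * (α^2 * (α^(2*i+1)/(Nat.factorial (2*i+1) : ℝ))) :=
          Finset.sum_le_sum hterm
      _ = 3/(4*Real.sqrt (π*(t:ℝ))) * 4^t * (α^2 * ∑ i ∈ range (t+1), α^(2*i+1)/(Nat.factorial (2*i+1) : ℝ)) := by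
          rw [Finset.mul_sum, Finset.mul_sum]
      _ ≤ 3/(4*Real.sqrt (π*(t:ℝ))) * 4^t * (α^2 * Real.sinh α) := by
          have hps : ∑ i ∈ range (t+1), α^(2*i+1)/(Nat.factorial (2*i+1) : ℝ) ≤ Real.sinh α :=
            (sinh_cosh_partial t).2 α (le_of_lt hα)
          apply mul_le_mul_of_nonneg_left _ (by positivity)
          apply mul_le_mul_of_nonneg_left hps (by positivity)
  -- |S| bound
  have hSb : |∑ m ∈ range (t+1), D m * g m| ≤ D 0 * s + 3/(4*Real.sqrt (π*(t:ℝ))) * 4^t * (α^2 * Real.sinh α) := by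
    have h1 : |∑ m ∈ range (t+1), D m * g m| ≤ |D 0 * Real.sin α| + |(∑ m ∈ range (t+1), D m * g m) - D 0 * Real.sin α| := by
      have := abs_add_le (D 0 * Real.sin α) ((∑ m ∈ range (t+1), D m * g m) - D 0 * Real.sin α)
      simpa using this
    have h2 : |D 0 * Real.sin α| = D 0 * s := by
      rw [abs_mul, abs_of_nonneg (hDnn 0), hsdef]
    have h3 : |(∑ m ∈ range (t+1), D m * g m) - D 0 * Real.sin α| ≤ 3/(4*Real.sqrt (π*(t:ℝ))) * 4^t * (α^2 * Real.sinh α) := by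
      rw [hby]
      exact hrem.trans herr
    linarith
  -- assemble
  have hωeq : ω k (2*t) = ((24*(k:ℝ)-1)/24)^t / (4^t * α) * ((-1:ℝ)^t * ∑ m ∈ range (t+1), D m * g m) := by
    simp only [hD, hg]
    exact omega_eq k t hk
  rw [hωeq]
  have hpref : (0:ℝ) < ((24*(k:ℝ)-1)/24)^t / (4^t * α) := by positivity
  have habs : |((24*(k:ℝ)-1)/24)^t / (4^t * α) * ((-1:ℝ)^t * ∑ m ∈ range (t+1), D m * g m)|
      = ((24*(k:ℝ)-1)/24)^t / (4^t * α) * |∑ m ∈ range (t+1), D m * g m| := by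
    rw [abs_mul, abs_mul, abs_pow, abs_neg, abs_one, one_pow, one_mul, abs_of_pos hpref]
  rw [habs]
  have hD0 : D 0 ≤ ((2*(t:ℝ)+1)) * (4^t / Real.sqrt (π*(t:ℝ))) := by
    have := D0_val t
    simp only [hD]
    rw [this]
    push_cast
    have hcb := central_binom_le t ht
    apply mul_le_mul_of_nonneg_left hcb (by positivity)
  have hchain : ((24*(k:ℝ)-1)/24)^t / (4^t * α) * |∑ m ∈ range (t+1), D m * g m|
      ≤ ((24*(k:ℝ)-1)/24)^t * ((2*(t:ℝ)+1)*s/(Real.sqrt π * Real.sqrt (t:ℝ) * α)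
          + 3*α*Real.sinh α/(4*(Real.sqrt π * Real.sqrt (t:ℝ)))) := by
    calc ((24*(k:ℝ)-1)/24)^t / (4^t * α) * |∑ m ∈ range (t+1), D m * g m|
        ≤ ((24*(k:ℝ)-1)/24)^t / (4^t * α) * ((((2*(t:ℝ)+1)) * (4^t / Real.sqrt (π*(t:ℝ)))) * s
            + 3/(4*Real.sqrt (π*(t:ℝ))) * 4^t * (α^2 * Real.sinh α)) := by
          apply mul_le_mul_of_nonneg_left _ (le_of_lt hpref)
          have : D 0 * s ≤ (((2*(t:ℝ)+1)) * (4^t / Real.sqrt (π*(t:ℝ)))) * s :=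
            mul_le_mul_of_nonneg_right hD0 (le_of_lt hs)
          linarith [hSb]
      _ = ((24*(k:ℝ)-1)/24)^t * ((2*(t:ℝ)+1)*s/(Real.sqrt π * Real.sqrt (t:ℝ) * α)
            + 3*α*Real.sinh α/(4*(Real.sqrt π * Real.sqrt (t:ℝ)))) := by
          rw [hpt]
          have h4t : ((4:ℝ)^t) ≠ 0 := by positivity
          field_simp
  refine hchain.trans ?_
  have hfa := final_arith s α (Real.sinh α) (C2 k) (Real.sqrt (t:ℝ)) (Real.sqrt π) (t:ℝ)
    hs hα hsinh (C2_nonneg k hk) hu hp htR (Real.mul_self_sqrt (le_of_lt htR))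
  have hprefpos : (0:ℝ) ≤ ((24*(k:ℝ)-1)/24)^t := by positivity
  have hC2s : C2s k = 1/2*(1+3*(α^2*Real.sinh α+4*C2 k)/(4*s)) := by
    rw [C2s, ← hαdef, ← hsdef]
  calc ((24*(k:ℝ)-1)/24)^t * ((2*(t:ℝ)+1)*s/(Real.sqrt π * Real.sqrt (t:ℝ) * α)
        + 3*α*Real.sinh α/(4*(Real.sqrt π * Real.sqrt (t:ℝ))))
      ≤ ((24*(k:ℝ)-1)/24)^t * (2*Real.sqrt (t:ℝ)/(Real.sqrt π * α)*s*(1 + (1/2*(1+3*(α^2*Real.sinh α+4*C2 k)/(4*s)))/(t:ℝ))) :=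
        mul_le_mul_of_nonneg_left hfa hprefpos
    _ = ((24*(k:ℝ)-1)/24)^t * (2*Real.sqrt (t:ℝ)/(Real.sqrt π * α)) * s * (1 + C2s k/(t:ℝ)) := by
        rw [hC2s]
        ring
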